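/- arXiv:2403.09691 — 4 statements merged into one kernel-verified Lean document; each statement's English description precedes it below -/
import Mathlib

section
/- For every sufficiently large even integer N: the number of primes p ≤ N^{0.838} with N − p ≥ 1 and Ω(N − p) ≤ 3 is at least S₁(N) − (1/2)·S₂(N) − E(N), where E(N) is the number of primes p ≤ N^{0.838} such that q² divides N − p for some prime q ≥ N^{1/11.99}. -/
/-- `S₁(N)`: the number of primes `p ≤ N^0.838` with `p ∤ N` such that every prime
`q < N^(1/11.99)` with `q ∤ N` satisfies `q ∤ N − p`. -/
noncomputable def S1 (N : ℕ) : ℕ :=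
  {p : ℕ | p.Prime ∧ (p : ℝ) ≤ (N : ℝ) ^ (0.838 : ℝ) ∧ ¬ p ∣ N ∧
    ∀ q : ℕ, q.Prime → (q : ℝ) < (N : ℝ) ^ (1 / 11.99 : ℝ) → ¬ q ∣ N →
      ¬ q ∣ (N - p)}.ncard

/-- `S₂(N) = Σ_q #{p prime : p ≤ N^0.838, p ∤ N, q ∣ N − p, and every prime
`r < N^(1/11.99)` with `r ∤ N` satisfies `r ∤ N − p}`, summed over primes `q` with
`N^(1/11.99) ≤ q < N^(1/3)` and `q ∤ N`; encoded as a count of pairs `(q, p)`. -/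
noncomputable def S2 (N : ℕ) : ℕ :=
  {qp : ℕ × ℕ | qp.1.Prime ∧ (N : ℝ) ^ (1 / 11.99 : ℝ) ≤ (qp.1 : ℝ) ∧
    (qp.1 : ℝ) < (N : ℝ) ^ (1 / 3 : ℝ) ∧ ¬ qp.1 ∣ N ∧
    qp.2.Prime ∧ (qp.2 : ℝ) ≤ (N : ℝ) ^ (0.838 : ℝ) ∧ ¬ qp.2 ∣ N ∧
    qp.1 ∣ (N - qp.2) ∧
    ∀ r : ℕ, r.Prime → (r : ℝ) < (N : ℝ) ^ (1 / 11.99 : ℝ) → ¬ r ∣ N →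
      ¬ r ∣ (N - qp.2)}.ncard

/-- `E(N)`: the number of primes `p ≤ N^0.838` such that `q²` divides `N − p` for some
prime `q ≥ N^(1/11.99)`. -/
noncomputable def E1 (N : ℕ) : ℕ :=
  {p : ℕ | p.Prime ∧ (p : ℝ) ≤ (N : ℝ) ^ (0.838 : ℝ) ∧
    ∃ q : ℕ, q.Prime ∧ (N : ℝ) ^ (1 / 11.99 : ℝ) ≤ (q : ℝ) ∧ q ^ 2 ∣ (N - p)}.ncard

/-- The condition that `(q, p)` is a pair counted by `S₂(N)`. -/
def PairCond (N : ℕ) (qp : ℕ × ℕ) : Prop :=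
  qp.1.Prime ∧ (N : ℝ) ^ (1 / 11.99 : ℝ) ≤ (qp.1 : ℝ) ∧
    (qp.1 : ℝ) < (N : ℝ) ^ (1 / 3 : ℝ) ∧ ¬ qp.1 ∣ N ∧
    qp.2.Prime ∧ (qp.2 : ℝ) ≤ (N : ℝ) ^ (0.838 : ℝ) ∧ ¬ qp.2 ∣ N ∧
    qp.1 ∣ (N - qp.2) ∧
    ∀ r : ℕ, r.Prime → (r : ℝ) < (N : ℝ) ^ (1 / 11.99 : ℝ) → ¬ r ∣ N →
      ¬ r ∣ (N - qp.2)

/-- Key combinatorial lemma: a sieve survivor which is not in the target set and not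
counted by `E(N)` has at least two distinct prime divisors counted by `S₂(N)`. -/
lemma key_lemma (N : ℕ) (hN : 2 ≤ N) (p : ℕ) (hp : p.Prime)
    (hpx : (p : ℝ) ≤ (N : ℝ) ^ (0.838 : ℝ)) (hpN : ¬ p ∣ N)
    (hsieve : ∀ q : ℕ, q.Prime → (q : ℝ) < (N : ℝ) ^ (1 / 11.99 : ℝ) → ¬ q ∣ N →
      ¬ q ∣ (N - p))
    (hT : ¬ (N - p).primeFactorsList.length ≤ 3)
    (hE : ¬ ∃ q : ℕ, q.Prime ∧ (N : ℝ) ^ (1 / 11.99 : ℝ) ≤ (q : ℝ) ∧ q ^ 2 ∣ (N - p)) :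
    ∃ q q' : ℕ, q ≠ q' ∧ PairCond N (q, p) ∧ PairCond N (q', p) := by
  classical
  have hN0 : (0 : ℝ) ≤ (N : ℝ) := by positivity
  have hN1 : (1 : ℝ) < (N : ℝ) := by exact_mod_cast hN
  set m := N - p with hm
  -- p < N
  have hpltN : p < N := by
    have h1 : ((N : ℝ)) ^ (0.838 : ℝ) < (N : ℝ) ^ (1 : ℝ) :=
      Real.rpow_lt_rpow_of_exponent_lt hN1 (by norm_num)
    rw [Real.rpow_one] at h1
    exact_mod_cast lt_of_le_of_lt hpx h1
  have hm1 : 1 ≤ m := by omega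
  have hmN : m ≤ N := Nat.sub_le _ _
  -- every prime divisor of m is ≥ N^(1/11.99) and does not divide N
  have hlarge : ∀ q : ℕ, q.Prime → q ∣ m →
      (N : ℝ) ^ (1 / 11.99 : ℝ) ≤ (q : ℝ) ∧ ¬ q ∣ N := by
    intro q hq hqm
    have hqN : ¬ q ∣ N := by
      intro hqN
      have : q ∣ p := by
        have := Nat.dvd_sub hqN hqm
        rwa [Nat.sub_sub_self (le_of_lt hpltN)] at this
      have : q = p := (Nat.prime_dvd_prime_iff_eq hq hp).mp this
      exact hpN (this ▸ hqN)
    refine ⟨?_, hqN⟩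
    by_contra h
    push_neg at h
    exact hsieve q hq h hqN hqm
  -- m is squarefree
  have hsf : Squarefree m := by
    rw [Nat.squarefree_iff_prime_squarefree]
    intro q hq hqq
    have hqm : q ∣ m := dvd_trans (dvd_mul_right q q) hqq
    exact hE ⟨q, hq, (hlarge q hq hqm).1, by rwa [sq]⟩
  -- m has at least 4 distinct prime factors
  have hcard : 4 ≤ m.primeFactors.card := by
    have hnd : m.primeFactorsList.Nodup :=
      (Nat.squarefree_iff_nodup_primeFactorsList (by omega)).mp hsf
    have : m.primeFactors.card = m.primeFactorsList.length := by
      rw [← Nat.toFinset_factors, List.toFinset_card_of_nodup hnd]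
    omega
  set F := m.primeFactors with hF
  set y := (N : ℝ) ^ (1 / 3 : ℝ) with hy
  have hy1 : (1 : ℝ) ≤ y := Real.one_le_rpow (le_of_lt hN1) (by norm_num)
  set Fs := F.filter (fun q : ℕ => ((q : ℝ) < y)) with hFs
  -- at least two prime factors below N^(1/3)
  have h2 : 2 ≤ Fs.card := by
    by_contra hcon
    push_neg at hcon
    set Fb := F.filter (fun q : ℕ => ¬ ((q : ℝ) < y)) with hFb
    have hsplit : Fs.card + Fb.card = F.card := Finset.card_filter_add_card_filter_not _
    have hb3 : 3 ≤ Fb.card := by omega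
    have hprodN : (∏ q ∈ F, q) ≤ N := by
      have h1 : (∏ q ∈ F, q) ∣ m := Nat.prod_primeFactors_dvd m
      exact le_trans (Nat.le_of_dvd (by omega) h1) hmN
    have hsplitN : (∏ q ∈ Fs, q) * (∏ q ∈ Fb, q) = ∏ q ∈ F, q := by
      rw [hFs, hFb]
      exact Finset.prod_filter_mul_prod_filter_not F _ _
    have hbig : y ^ Fb.card ≤ ((∏ q ∈ Fb, q : ℕ) : ℝ) := by
      rw [Nat.cast_prod, ← Finset.prod_const]
      refine Finset.prod_le_prod (fun i _ => by positivity) (fun i hi => ?_)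
      rw [hFb, Finset.mem_filter] at hi
      exact not_lt.mp hi.2
    have hy3 : y ^ (3 : ℕ) = (N : ℝ) := by
      rw [hy, ← Real.rpow_natCast ((N : ℝ) ^ (1/3 : ℝ)) 3, ← Real.rpow_mul hN0]
      norm_num
    have hs_pos : 0 < ∏ q ∈ Fs, q :=
      Finset.prod_pos fun i hi =>
        (Nat.prime_of_mem_primeFactors (Finset.mem_filter.mp hi).1).pos
    rcases Nat.lt_or_ge Fb.card 4 with hb | hb
    · -- Fb.card = 3, so Fs is nonempty
      have hbeq : Fb.card = 3 := by omega
      obtain ⟨q0, hq0⟩ := Finset.card_pos.mp (by omega : 0 < Fs.card)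
      have hq0p : q0.Prime := Nat.prime_of_mem_primeFactors (Finset.mem_filter.mp hq0).1
      have hsmall2 : 2 ≤ ∏ q ∈ Fs, q := by
        calc 2 ≤ q0 := hq0p.two_le
        _ ≤ ∏ q ∈ Fs, q := Finset.single_le_prod'
            (fun i hi =>
              (Nat.prime_of_mem_primeFactors (Finset.mem_filter.mp hi).1).one_lt.le) hq0
      have hfin : 2 * (N : ℝ) ≤ (N : ℝ) := by
        calc 2 * (N : ℝ) = 2 * y ^ (3 : ℕ) := by rw [hy3]
        _ = 2 * y ^ Fb.card := by rw [hbeq]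
        _ ≤ ((∏ q ∈ Fs, q : ℕ) : ℝ) * ((∏ q ∈ Fb, q : ℕ) : ℝ) := by
            refine mul_le_mul (by exact_mod_cast hsmall2) hbig (by positivity) ?_
            exact_mod_cast hs_pos.le
        _ = ((∏ q ∈ F, q : ℕ) : ℝ) := by rw [← Nat.cast_mul, hsplitN]
        _ ≤ (N : ℝ) := by exact_mod_cast hprodN
      linarith
    · -- Fb.card ≥ 4
      have h4 : (N : ℝ) ^ (4/3 : ℝ) ≤ y ^ Fb.card := by
        have h5 : (N : ℝ) ^ (4/3 : ℝ) = y ^ (4 : ℕ) := by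
          rw [hy, ← Real.rpow_natCast ((N : ℝ) ^ (1/3 : ℝ)) 4, ← Real.rpow_mul hN0]
          norm_num
        rw [h5]
        exact pow_le_pow_right₀ hy1 hb
      have hgt : (N : ℝ) < (N : ℝ) ^ (4/3 : ℝ) := by
        nth_rewrite 1 [← Real.rpow_one (N : ℝ)]
        exact Real.rpow_lt_rpow_of_exponent_lt hN1 (by norm_num)
      have hle2 : (∏ q ∈ Fb, q) ≤ N := by
        calc (∏ q ∈ Fb, q) ≤ (∏ q ∈ Fs, q) * (∏ q ∈ Fb, q) :=
              Nat.le_mul_of_pos_left _ hs_pos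
        _ = ∏ q ∈ F, q := hsplitN
        _ ≤ N := hprodN
      have : (N : ℝ) ^ (4/3 : ℝ) ≤ (N : ℝ) :=
        le_trans (le_trans h4 hbig) (by exact_mod_cast hle2)
      linarith
  -- pick two distinct elements of Fs
  obtain ⟨q, hq, q', hq', hne⟩ := Finset.one_lt_card.mp (by omega : 1 < Fs.card)
  have mk : ∀ r ∈ Fs, PairCond N (r, p) := by
    intro r hr
    obtain ⟨hrF, hry⟩ := Finset.mem_filter.mp hr
    have hrp : r.Prime := Nat.prime_of_mem_primeFactors hrF
    have hrm : r ∣ m := Nat.dvd_of_mem_primeFactors hrF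
    obtain ⟨hrz, hrN⟩ := hlarge r hrp hrm
    exact ⟨hrp, hrz, hry, hrN, hp, hpx, hpN, hrm, hsieve⟩
  exact ⟨q, q', hne, mk q hq, mk q' hq'⟩

theorem weighted_sieve_small_primes :
    ∃ N₀ : ℕ, ∀ N : ℕ, N₀ ≤ N → Even N →
      (S1 N : ℝ) - (1 / 2) * (S2 N : ℝ) - (E1 N : ℝ) ≤
        ({p : ℕ | p.Prime ∧ (p : ℝ) ≤ (N : ℝ) ^ (0.838 : ℝ) ∧ 1 ≤ N - p ∧
            (N - p).primeFactorsList.length ≤ 3}.ncard : ℝ) := by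
  classical
  refine ⟨2, fun N hN _hEven => ?_⟩
  have hN1 : (1 : ℝ) < (N : ℝ) := by exact_mod_cast hN
  -- p ≤ N^0.838 implies p ≤ N
  have hle : ∀ p : ℕ, (p : ℝ) ≤ (N : ℝ) ^ (0.838 : ℝ) → p ≤ N := by
    intro p hp
    have h1 : ((N : ℝ)) ^ (0.838 : ℝ) < (N : ℝ) ^ (1 : ℝ) :=
      Real.rpow_lt_rpow_of_exponent_lt hN1 (by norm_num)
    rw [Real.rpow_one] at h1
    exact le_of_lt (by exact_mod_cast lt_of_le_of_lt hp h1)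
  set A : Set ℕ := {p : ℕ | p.Prime ∧ (p : ℝ) ≤ (N : ℝ) ^ (0.838 : ℝ) ∧ ¬ p ∣ N ∧
    ∀ q : ℕ, q.Prime → (q : ℝ) < (N : ℝ) ^ (1 / 11.99 : ℝ) → ¬ q ∣ N →
      ¬ q ∣ (N - p)} with hA
  set T : Set ℕ := {p : ℕ | p.Prime ∧ (p : ℝ) ≤ (N : ℝ) ^ (0.838 : ℝ) ∧ 1 ≤ N - p ∧
            (N - p).primeFactorsList.length ≤ 3} with hT
  set Eset : Set ℕ := {p : ℕ | p.Prime ∧ (p : ℝ) ≤ (N : ℝ) ^ (0.838 : ℝ) ∧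
    ∃ q : ℕ, q.Prime ∧ (N : ℝ) ^ (1 / 11.99 : ℝ) ≤ (q : ℝ) ∧ q ^ 2 ∣ (N - p)} with hEset
  set P : Set (ℕ × ℕ) := {qp : ℕ × ℕ | PairCond N qp} with hP
  set C : Set ℕ := {p : ℕ | ∃ q q' : ℕ, q ≠ q' ∧ PairCond N (q, p) ∧ PairCond N (q', p)}
    with hC
  -- finiteness
  have hTfin : T.Finite :=
    Set.Finite.subset (Set.finite_Iic N) (fun p hp => hle p hp.2.1)
  have hEfin : Eset.Finite :=
    Set.Finite.subset (Set.finite_Iic N) (fun p hp => hle p hp.2.1)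
  have hPfin : P.Finite := by
    apply Set.Finite.subset (Set.Finite.prod (Set.finite_Iic N) (Set.finite_Iic N))
    rintro ⟨q, p⟩ hqp
    obtain ⟨h1, h2, h3, h4, h5, h6, _⟩ := hqp
    constructor
    · have hyN : ((N : ℝ)) ^ (1/3 : ℝ) < (N : ℝ) ^ (1 : ℝ) :=
        Real.rpow_lt_rpow_of_exponent_lt hN1 (by norm_num)
      rw [Real.rpow_one] at hyN
      exact le_of_lt (by exact_mod_cast lt_of_lt_of_le h3 hyN.le)
    · exact hle p h6
  have hCfin : C.Finite := by
    apply Set.Finite.subset (hPfin.image Prod.snd)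
    rintro p ⟨q, q', _, hq, _⟩
    exact ⟨(q, p), hq, rfl⟩
  -- main inclusion
  have hsub : A ⊆ T ∪ Eset ∪ C := by
    intro p hp
    obtain ⟨hpp, hpx, hpN, hsieve⟩ := hp
    by_cases hTc : (N - p).primeFactorsList.length ≤ 3
    · left; left
      refine ⟨hpp, hpx, ?_, hTc⟩
      have hpN' : p < N := by
        have h1 : ((N : ℝ)) ^ (0.838 : ℝ) < (N : ℝ) ^ (1 : ℝ) :=
          Real.rpow_lt_rpow_of_exponent_lt hN1 (by norm_num)
        rw [Real.rpow_one] at h1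
        exact_mod_cast lt_of_le_of_lt hpx h1
      omega
    · by_cases hEc : ∃ q : ℕ, q.Prime ∧ (N : ℝ) ^ (1 / 11.99 : ℝ) ≤ (q : ℝ) ∧
          q ^ 2 ∣ (N - p)
      · left; right; exact ⟨hpp, hpx, hEc⟩
      · right
        exact key_lemma N hN p hpp hpx hpN hsieve hTc hEc
  have hAfin : A.Finite := Set.Finite.subset ((hTfin.union hEfin).union hCfin) hsub
  -- S1 ≤ T + E + C
  have step1 : S1 N ≤ T.ncard + Eset.ncard + C.ncard := by
    calc S1 N = A.ncard := rfl
    _ ≤ (T ∪ Eset ∪ C).ncard :=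
        Set.ncard_le_ncard hsub ((hTfin.union hEfin).union hCfin)
    _ ≤ (T ∪ Eset).ncard + C.ncard := Set.ncard_union_le _ _
    _ ≤ T.ncard + Eset.ncard + C.ncard := by
        have := Set.ncard_union_le T Eset
        omega
  -- 2 * C ≤ S2
  have step2 : 2 * C.ncard ≤ S2 N := by
    have hQ1 : ∀ p ∈ C, ∃ qq : ℕ × ℕ, qq.1 ≠ qq.2 ∧ PairCond N (qq.1, p) ∧
        PairCond N (qq.2, p) := by
      rintro p ⟨q, q', hne, h1, h2⟩
      exact ⟨(q, q'), hne, h1, h2⟩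
    choose! f hf using hQ1
    set g1 : ℕ → ℕ × ℕ := fun p => ((f p).1, p) with hg1
    set g2 : ℕ → ℕ × ℕ := fun p => ((f p).2, p) with hg2
    have hinj1 : Set.InjOn g1 C := fun a _ b _ h => congrArg Prod.snd h
    have hinj2 : Set.InjOn g2 C := fun a _ b _ h => congrArg Prod.snd h
    have hsub1 : g1 '' C ⊆ P := by
      rintro _ ⟨p, hp, rfl⟩; exact (hf p hp).2.1
    have hsub2 : g2 '' C ⊆ P := by
      rintro _ ⟨p, hp, rfl⟩; exact (hf p hp).2.2
    have hdisj : Disjoint (g1 '' C) (g2 '' C) := by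
      rw [Set.disjoint_left]
      rintro _ ⟨p, hp, rfl⟩ ⟨p', hp', heq⟩
      have hpp' : p' = p := congrArg Prod.snd heq
      rw [hpp'] at heq hp'
      exact (hf p hp).1 (congrArg Prod.fst heq).symm
    have hcount : (g1 '' C ∪ g2 '' C).ncard ≤ P.ncard :=
      Set.ncard_le_ncard (Set.union_subset hsub1 hsub2) hPfin
    rw [Set.ncard_union_eq hdisj (hCfin.image g1) (hCfin.image g2),
      Set.ncard_image_of_injOn hinj1, Set.ncard_image_of_injOn hinj2] at hcount
    have : S2 N = P.ncard := rfl
    omega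
  -- conclude
  have h1 : (S1 N : ℝ) ≤ (T.ncard : ℝ) + (Eset.ncard : ℝ) + (C.ncard : ℝ) := by
    exact_mod_cast step1
  have h2 : 2 * (C.ncard : ℝ) ≤ (S2 N : ℝ) := by exact_mod_cast step2
  have h3 : (E1 N : ℝ) = (Eset.ncard : ℝ) := rfl
  linarith [h1, h2, h3]
end

section
/- Let F, f : (0, ∞) → ℝ be a pair of linear-sieve functions, i.e. F and f are continuous on (0, ∞), F(s) = 2e^γ/s and f(s) = 0 for 0 < s ≤ 2, and for every s > 2 the maps s ↦ sF(s) and s ↦ sf(s) are differentiable at s with derivatives (sF(s))' = f(s−1) and (sf(s))' = F(s−1). Then for all s with 2 ≤ s ≤ 4, f(s) = 2e^γ log(s−1)/s. -/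
theorem linear_sieve_f_on_2_4
    (F f : ℝ → ℝ)
    (hFc : ContinuousOn F (Set.Ioi 0)) (hfc : ContinuousOn f (Set.Ioi 0))
    (hF0 : ∀ s : ℝ, 0 < s → s ≤ 2 →
      F s = 2 * Real.exp Real.eulerMascheroniConstant / s)
    (hf0 : ∀ s : ℝ, 0 < s → s ≤ 2 → f s = 0)
    (hF' : ∀ s : ℝ, 2 < s → HasDerivAt (fun t => t * F t) (f (s - 1)) s)
    (hf' : ∀ s : ℝ, 2 < s → HasDerivAt (fun t => t * f t) (F (s - 1)) s) :
    ∀ s : ℝ, 2 ≤ s → s ≤ 4 →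
      f s = 2 * Real.exp Real.eulerMascheroniConstant * Real.log (s - 1) / s := by
  set E := 2 * Real.exp Real.eulerMascheroniConstant with hE
  have hEpos : 0 < E := by positivity
  -- Step 1: F s = E / s on (0, 3]
  have hF3 : ∀ s : ℝ, 0 < s → s ≤ 3 → F s = E / s := by
    intro s hs hs3
    rcases le_or_gt s 2 with h2 | h2
    · exact hF0 s hs h2
    · have hsub : Set.Icc (2:ℝ) s ⊆ Set.Ioi 0 := by
        intro t ht; exact lt_of_lt_of_le (by norm_num) ht.1
      have hcont : ContinuousOn (fun t => t * F t) (Set.Icc 2 s) :=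
        continuousOn_id.mul (hFc.mono hsub)
      obtain ⟨c, hc, hslope⟩ := exists_hasDerivAt_eq_slope (fun t => t * F t)
        (fun x => f (x - 1)) h2 hcont (fun x hx => hF' x hx.1)
      have hfz : f (c - 1) = 0 := hf0 _ (by linarith [hc.1]) (by linarith [hc.2])
      have h2F : (2:ℝ) * F 2 = E := by
        rw [hF0 2 (by norm_num) le_rfl]; field_simp
      rw [hfz] at hslope
      have hne : s - 2 ≠ 0 := by linarith
      have h0 : s * F s - 2 * F 2 = 0 := by
        have := (div_eq_zero_iff.mp hslope.symm).resolve_right hne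
        linarith
      have hsF : s * F s = E := by linarith
      rw [eq_div_iff hs.ne']
      linarith [hsF]
  -- Step 2
  intro s hs2 hs4
  rcases eq_or_lt_of_le hs2 with h2 | h2
  · rw [← h2]
    rw [hf0 2 (by norm_num) le_rfl]
    norm_num
  · set d : ℝ → ℝ := fun t => t * f t - E * Real.log (t - 1) with hd
    have hsub : Set.Icc (2:ℝ) s ⊆ Set.Ioi 0 := by
      intro t ht; exact lt_of_lt_of_le (by norm_num) ht.1
    have hcont : ContinuousOn d (Set.Icc 2 s) := by
      apply (continuousOn_id.mul (hfc.mono hsub)).sub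
      apply ContinuousOn.mul continuousOn_const
      apply ContinuousOn.log (continuousOn_id.sub continuousOn_const)
      intro t ht h
      have ht1 : t = 1 := by simpa [sub_eq_zero] using h
      linarith [ht.1]
    have hderiv : ∀ x ∈ Set.Ioo (2:ℝ) s, HasDerivAt d 0 x := by
      intro x hx
      have hx2 : 2 < x := hx.1
      have hlog : HasDerivAt (fun t : ℝ => Real.log (t - 1)) (1 / (x - 1)) x := by
        have h1 : HasDerivAt (fun t : ℝ => t - 1) 1 x := (hasDerivAt_id x).sub_const 1
        have := (Real.hasDerivAt_log (by linarith : x - 1 ≠ 0)).comp x h1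
        simpa [one_div, Function.comp_def] using this
      have hFx : F (x - 1) = E / (x - 1) :=
        hF3 (x - 1) (by linarith) (by linarith [hx.2])
      have := (hf' x hx2).sub (hlog.const_mul E)
      have heq : F (x - 1) - E * (1 / (x - 1)) = 0 := by
        rw [hFx]; field_simp; simp
      rw [heq] at this
      exact this
    obtain ⟨c, hc, hslope⟩ := exists_hasDerivAt_eq_slope d (fun _ => 0) h2 hcont hderiv
    have hne : s - 2 ≠ 0 := by linarith
    have h0 : d s - d 2 = 0 := by
      have := (div_eq_zero_iff.mp hslope.symm).resolve_right hne
      linarith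
    have hd2 : d 2 = 0 := by
      simp only [hd, hf0 2 (by norm_num) le_rfl]
      norm_num
    have hds : s * f s = E * Real.log (s - 1) := by
      have : d s = 0 := by linarith
      simpa [hd, sub_eq_zero] using this
    have hspos : (0:ℝ) < s := by linarith
    rw [eq_div_iff hspos.ne']
    linarith [hds]
end

section
/- Let F, f : (0, ∞) → ℝ be a pair of linear-sieve functions, i.e. F and f are continuous on (0, ∞), F(s) = 2e^γ/s and f(s) = 0 for 0 < s ≤ 2, and for every s > 2 the maps s ↦ sF(s) and s ↦ sf(s) are differentiable at s with derivatives (sF(s))' = f(s−1) and (sf(s))' = F(s−1). Then for all s with 4 ≤ s ≤ 6, f(s) = (2e^γ/s) · ( log(s−1) + ∫₃^{s−1} (1/t) ( ∫₂^{t−1} log(u−1)/u du ) dt ). -/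
open intervalIntegral Set MeasureTheory

theorem linear_sieve_f_on_4_6
    (F f : ℝ → ℝ)
    (hFc : ContinuousOn F (Set.Ioi 0)) (hfc : ContinuousOn f (Set.Ioi 0))
    (hF0 : ∀ s : ℝ, 0 < s → s ≤ 2 →
      F s = 2 * Real.exp Real.eulerMascheroniConstant / s)
    (hf0 : ∀ s : ℝ, 0 < s → s ≤ 2 → f s = 0)
    (hF' : ∀ s : ℝ, 2 < s → HasDerivAt (fun t => t * F t) (f (s - 1)) s)
    (hf' : ∀ s : ℝ, 2 < s → HasDerivAt (fun t => t * f t) (F (s - 1)) s) :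
    ∀ s : ℝ, 4 ≤ s → s ≤ 6 →
      f s = 2 * Real.exp Real.eulerMascheroniConstant / s *
        (Real.log (s - 1) +
          ∫ t in (3 : ℝ)..(s - 1),
            (1 / t) * ∫ u in (2 : ℝ)..(t - 1), Real.log (u - 1) / u) := by
  intro s hs4 hs6
  set c : ℝ := 2 * Real.exp Real.eulerMascheroniConstant with hc
  -- Step A : F x = c / x on (0, 3]
  have hA : ∀ x : ℝ, 0 < x → x ≤ 3 → F x = c / x := by
    intro x hx0 hx3
    rcases le_or_gt x 2 with h | h
    · exact hF0 x hx0 h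
    · have hcont : ContinuousOn (fun t : ℝ => t * F t) (Icc 2 x) :=
        continuousOn_id.mul (hFc.mono (fun t ht => by simp at ht ⊢; linarith [ht.1]))
      have hint : IntervalIntegrable (fun t : ℝ => f (t - 1)) volume 2 x := by
        apply ContinuousOn.intervalIntegrable
        apply hfc.comp ((continuous_id.sub continuous_const).continuousOn)
        intro t ht
        rw [uIcc_of_le h.le] at ht
        simp at ht ⊢; linarith [ht.1]
      have key := integral_eq_sub_of_hasDeriv_right_of_le h.le hcont
        (fun t ht => (hF' t ht.1).hasDerivWithinAt) hint
      have h0 : (∫ t in (2:ℝ)..x, f (t - 1)) = 0 := by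
        rw [intervalIntegral.integral_congr (g := fun _ => (0:ℝ))]
        · simp
        · intro t ht
          rw [uIcc_of_le h.le] at ht
          exact hf0 (t - 1) (by linarith [ht.1]) (by linarith [ht.2])
      have hF2 : F 2 = c / 2 := hF0 2 (by norm_num) le_rfl
      rw [h0, hF2] at key
      have : x * F x = c := by linarith
      field_simp
      linarith
  -- Step B : f x = c * log (x-1) / x on [2, 4]
  have hB : ∀ x : ℝ, 2 ≤ x → x ≤ 4 → f x = c * Real.log (x - 1) / x := by
    intro x hx2 hx4
    rcases eq_or_lt_of_le hx2 with h | h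
    · rw [← h, hf0 2 (by norm_num) le_rfl]; norm_num
    · have hcont : ContinuousOn (fun t : ℝ => t * f t) (Icc 2 x) :=
        continuousOn_id.mul (hfc.mono (fun t ht => by simp at ht ⊢; linarith [ht.1]))
      have hint : IntervalIntegrable (fun t : ℝ => F (t - 1)) volume 2 x := by
        apply ContinuousOn.intervalIntegrable
        apply hFc.comp ((continuous_id.sub continuous_const).continuousOn)
        intro t ht
        rw [uIcc_of_le h.le] at ht
        simp at ht ⊢; linarith [ht.1]
      have key := integral_eq_sub_of_hasDeriv_right_of_le h.le hcont
        (fun t ht => (hf' t ht.1).hasDerivWithinAt) hint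
      have h0 : (∫ t in (2:ℝ)..x, F (t - 1)) = c * Real.log (x - 1) := by
        rw [intervalIntegral.integral_congr (g := fun t => c / (t - 1))]
        · rw [show (∫ t in (2:ℝ)..x, c / (t - 1)) =
              ∫ t in (2:ℝ)..x, (fun u => c / u) (t - 1) from rfl,
            intervalIntegral.integral_comp_sub_right (fun u => c / u) 1]
          norm_num
          simp_rw [div_eq_mul_inv]
          rw [intervalIntegral.integral_const_mul, integral_inv_of_pos (by norm_num)
            (by linarith)]
          simp
        · intro t ht
          rw [uIcc_of_le h.le] at ht
          exact hA (t - 1) (by linarith [ht.1]) (by linarith [ht.2])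
      rw [h0, hf0 2 (by norm_num) le_rfl] at key
      have hx0 : x ≠ 0 := by linarith
      field_simp
      linarith
  -- Step C : x * F x = c + ∫₃ˣ c log(t-2)/(t-1) on [3, 5]
  have hC : ∀ x : ℝ, 3 ≤ x → x ≤ 5 →
      x * F x = c + ∫ t in (3:ℝ)..x, c * Real.log (t - 2) / (t - 1) := by
    intro x hx3 hx5
    have hcont : ContinuousOn (fun t : ℝ => t * F t) (Icc 3 x) :=
      continuousOn_id.mul (hFc.mono (fun t ht => by simp at ht ⊢; linarith [ht.1]))
    have hint : IntervalIntegrable (fun t : ℝ => f (t - 1)) volume 3 x := by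
      apply ContinuousOn.intervalIntegrable
      apply hfc.comp ((continuous_id.sub continuous_const).continuousOn)
      intro t ht
      rw [uIcc_of_le hx3] at ht
      simp at ht ⊢; linarith [ht.1]
    have key := integral_eq_sub_of_hasDeriv_right_of_le hx3 hcont
      (fun t ht => (hF' t (by linarith [ht.1])).hasDerivWithinAt) hint
    have h0 : (∫ t in (3:ℝ)..x, f (t - 1)) =
        ∫ t in (3:ℝ)..x, c * Real.log (t - 2) / (t - 1) := by
      apply intervalIntegral.integral_congr
      intro t ht
      rw [uIcc_of_le hx3] at ht
      show f (t - 1) = c * Real.log (t - 2) / (t - 1)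
      rw [hB (t - 1) (by linarith [ht.1]) (by linarith [ht.2]),
        show t - 1 - 1 = t - 2 by ring]
    have hF3 : 3 * F 3 = c := by
      rw [hA 3 (by norm_num) le_rfl]; ring
    rw [h0, hF3] at key
    linarith
  -- Step D : main computation
  have hcont : ContinuousOn (fun t : ℝ => t * f t) (Icc 4 s) :=
    continuousOn_id.mul (hfc.mono (fun t ht => by simp at ht ⊢; linarith [ht.1]))
  have hint : IntervalIntegrable (fun t : ℝ => F (t - 1)) volume 4 s := by
    apply ContinuousOn.intervalIntegrable
    apply hFc.comp ((continuous_id.sub continuous_const).continuousOn)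
    intro t ht
    rw [uIcc_of_le hs4] at ht
    simp at ht ⊢; linarith [ht.1]
  have key := integral_eq_sub_of_hasDeriv_right_of_le hs4 hcont
    (fun t ht => (hf' t (by linarith [ht.1])).hasDerivWithinAt) hint
  -- rewrite the integrand using step C, shifted
  have h0 : (∫ t in (4:ℝ)..s, F (t - 1)) =
      ∫ t in (3:ℝ)..(s-1),
        (c + ∫ u in (3:ℝ)..t, c * Real.log (u - 2) / (u - 1)) / t := by
    rw [intervalIntegral.integral_congr
        (g := fun t => (fun x => (c + ∫ u in (3:ℝ)..x, c * Real.log (u - 2) / (u - 1)) / x) (t - 1))]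
    · rw [intervalIntegral.integral_comp_sub_right
        (fun x => (c + ∫ u in (3:ℝ)..x, c * Real.log (u - 2) / (u - 1)) / x) 1]
      norm_num
    · intro t ht
      rw [uIcc_of_le hs4] at ht
      have h1 : (t - 1) * F (t - 1) = c + ∫ u in (3:ℝ)..(t-1), c * Real.log (u - 2) / (u - 1) :=
        hC (t - 1) (by linarith [ht.1]) (by linarith [ht.2])
      have ht1 : t - 1 ≠ 0 := by intro h; simp at ht; linarith [ht.1]
      simp only
      rw [← h1, mul_div_assoc]
      field_simp
  -- inner integral change of variables
  have hinner : ∀ t : ℝ, (∫ u in (3:ℝ)..t, c * Real.log (u - 2) / (u - 1)) =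
      c * ∫ u in (2:ℝ)..(t-1), Real.log (u - 1) / u := by
    intro t
    have heq : (fun u : ℝ => c * Real.log (u - 2) / (u - 1)) =
        fun u : ℝ => (fun v => c * Real.log (v - 1) / v) (u - 1) := by
      funext u
      show c * Real.log (u - 2) / (u - 1) = c * Real.log (u - 1 - 1) / (u - 1)
      rw [show u - 1 - 1 = u - 2 by ring]
    rw [heq, intervalIntegral.integral_comp_sub_right (fun v => c * Real.log (v - 1) / v) 1,
      show (3:ℝ) - 1 = 2 by norm_num]
    simp_rw [mul_div_assoc]
    rw [intervalIntegral.integral_const_mul]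
  -- continuity of inner primitive
  have hKcont : ContinuousOn (fun t : ℝ => ∫ u in (2:ℝ)..(t-1), Real.log (u - 1) / u)
      (Icc 3 (s-1)) := by
    have hlogcont : ContinuousOn (fun u : ℝ => Real.log (u - 1) / u) (uIcc 2 (s-2)) := by
      rw [uIcc_of_le (by linarith)]
      apply ContinuousOn.div
      · exact Real.continuousOn_log.comp ((continuous_id.sub continuous_const).continuousOn)
          (fun u hu => by simp at hu ⊢; intro h; linarith [hu.1])
      · exact continuousOn_id
      · intro u hu; simp at hu; intro h; linarith [hu.1]
    have hprim := intervalIntegral.continuousOn_primitive_interval' (μ := volume)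
      (b₁ := 2) (b₂ := s - 2) (a := 2) (hlogcont.intervalIntegrable) (left_mem_uIcc)
    apply hprim.comp ((continuous_id.sub continuous_const).continuousOn)
    intro t ht
    rw [uIcc_of_le (by linarith : (2:ℝ) ≤ s - 2)]
    simp at ht ⊢; constructor <;> linarith [ht.1, ht.2]
  -- split the integral
  have hsplit : (∫ t in (3:ℝ)..(s-1),
      (c + ∫ u in (3:ℝ)..t, c * Real.log (u - 2) / (u - 1)) / t) =
      (∫ t in (3:ℝ)..(s-1), c / t) +
      c * ∫ t in (3:ℝ)..(s-1), (1/t) * ∫ u in (2:ℝ)..(t-1), Real.log (u - 1) / u := by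
    rw [intervalIntegral.integral_congr
        (g := fun t => c / t + c * ((1/t) * ∫ u in (2:ℝ)..(t-1), Real.log (u - 1) / u))]
    · rw [intervalIntegral.integral_add, intervalIntegral.integral_const_mul]
      · apply ContinuousOn.intervalIntegrable
        rw [uIcc_of_le (by linarith)]
        exact continuousOn_const.div continuousOn_id
          (fun t ht => by simp at ht; intro h; linarith [ht.1])
      · apply ContinuousOn.intervalIntegrable
        rw [uIcc_of_le (by linarith)]
        apply ContinuousOn.mul continuousOn_const
        apply ContinuousOn.mul
        · exact continuousOn_const.div continuousOn_id
            (fun t ht => by simp at ht; intro h; linarith [ht.1])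
        · exact hKcont
    · intro t ht
      rw [uIcc_of_le (by linarith)] at ht
      have ht0 : t ≠ 0 := by simp at ht; intro h; linarith [ht.1]
      show (c + ∫ u in (3:ℝ)..t, c * Real.log (u - 2) / (u - 1)) / t =
        c / t + c * ((1/t) * ∫ u in (2:ℝ)..(t-1), Real.log (u - 1) / u)
      rw [hinner t]
      field_simp
  -- first piece
  have hlogint : (∫ t in (3:ℝ)..(s-1), c / t) = c * (Real.log (s-1) - Real.log 3) := by
    simp_rw [div_eq_mul_inv]
    rw [intervalIntegral.integral_const_mul, integral_inv_of_pos (by norm_num) (by linarith),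
      Real.log_div (by linarith) (by norm_num)]
  -- f 4
  have hf4 : 4 * f 4 = c * Real.log 3 := by
    rw [hB 4 (by norm_num) le_rfl]; norm_num; ring
  rw [h0, hsplit, hlogint] at key
  have hsfs : s * f s = c * (Real.log (s-1) +
      ∫ t in (3:ℝ)..(s-1), (1/t) * ∫ u in (2:ℝ)..(t-1), Real.log (u - 1) / u) := by
    linear_combination -key + hf4
  have hs0 : s ≠ 0 := by linarith
  rw [div_mul_eq_mul_div, eq_div_iff hs0]
  linear_combination hsfs
end

section
/- Let F, f : (0, ∞) → ℝ be a pair of linear-sieve functions, i.e. F and f are continuous on (0, ∞), F(s) = 2e^γ/s and f(s) = 0 for 0 < s ≤ 2, and for every s > 2 the maps s ↦ sF(s) and s ↦ sf(s) are differentiable at s with derivatives (sF(s))' = f(s−1) and (sf(s))' = F(s−1). Then for all s with 5 ≤ s ≤ 7, F(s) = (2e^γ/s) · ( 1 + ∫₂^{s−1} log(t−1)/t dt + ∫₂^{s−3} (log(t−1)/t) ( ∫_{t+2}^{s−1} (1/u) log((u−1)/(t+1)) du ) dt ). -/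
open Set intervalIntegral MeasureTheory

/-- Two functions continuous on `[a,b]` with equal derivatives on `(a,b)`
and equal values at `a` agree on `[a,b]`. -/
lemma eqOn_of_deriv' {a b : ℝ} {g h d : ℝ → ℝ}
    (hg : ContinuousOn g (Icc a b)) (hh : ContinuousOn h (Icc a b))
    (hg' : ∀ x ∈ Ioo a b, HasDerivAt g (d x) x)
    (hh' : ∀ x ∈ Ioo a b, HasDerivAt h (d x) x)
    (h0 : g a = h a) : ∀ x ∈ Icc a b, g x = h x := by
  intro x hx
  have hk' : ∀ y ∈ Ioo a b, HasDerivAt (fun z => g z - h z) 0 y := by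
    intro y hy
    have := (hg' y hy).sub (hh' y hy)
    rw [sub_self] at this
    exact this
  have hkc : ContinuousOn (fun z => g z - h z) (Icc a b) := hg.sub hh
  have hdiff : DifferentiableOn ℝ (fun z => g z - h z) (interior (Icc a b)) := by
    rw [interior_Icc]; exact fun y hy => (hk' y hy).differentiableAt.differentiableWithinAt
  have hder : ∀ y ∈ interior (Icc a b), deriv (fun z => g z - h z) y = 0 := by
    rw [interior_Icc]; exact fun y hy => (hk' y hy).deriv
  have hmono : MonotoneOn (fun z => g z - h z) (Icc a b) :=
    monotoneOn_of_deriv_nonneg (convex_Icc a b) hkc hdiff (fun y hy => (hder y hy).ge)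
  have hanti : AntitoneOn (fun z => g z - h z) (Icc a b) :=
    antitoneOn_of_deriv_nonpos (convex_Icc a b) hkc hdiff (fun y hy => (hder y hy).le)
  have ha : a ∈ Icc a b := ⟨le_refl a, hx.1.trans hx.2⟩
  have h1 := hmono ha hx hx.1
  have h2 := hanti ha hx hx.1
  have : g x - h x = g a - h a := le_antisymm h2 h1
  rw [h0] at this; linarith

/-- FTC: derivative of a primitive of a function continuous on `Ioi L`. -/
lemma ftc' {g : ℝ → ℝ} {L a x : ℝ} (hg : ContinuousOn g (Ioi L)) (ha : L < a) (hx : L < x) :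
    HasDerivAt (fun y => ∫ t in a..y, g t) (g x) x := by
  apply intervalIntegral.integral_hasDerivAt_right
  · exact (hg.mono (Set.ordConnected_Ioi.uIcc_subset ha hx)).intervalIntegrable
  · exact ⟨Ioi L, Ioi_mem_nhds hx, (hg.aestronglyMeasurable measurableSet_Ioi)⟩
  · exact hg.continuousAt (Ioi_mem_nhds hx)

noncomputable def phi (t : ℝ) : ℝ := Real.log (t - 1) / t
noncomputable def Pv (x : ℝ) : ℝ := ∫ t in (2:ℝ)..x, phi t
noncomputable def Mv (x : ℝ) : ℝ := ∫ t in (2:ℝ)..x, phi t * Real.log (t + 1)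
noncomputable def Av (x : ℝ) : ℝ := ∫ t in (2:ℝ)..x, phi t * Pv (t + 2)
noncomputable def Bv (x : ℝ) : ℝ := ∫ t in (2:ℝ)..x, phi t * (Real.log (t + 1) * Real.log (t + 2))
noncomputable def Jv (u : ℝ) : ℝ := Real.log (u - 1) * Pv (u - 2) - Mv (u - 2)
noncomputable def Tb (x : ℝ) : ℝ := ∫ u in (4:ℝ)..x, Pv (u - 2) / (u - 1)
noncomputable def Dt (x : ℝ) : ℝ := ∫ u in (4:ℝ)..x, (1 / u) * Jv u

lemma phi_contOn : ContinuousOn phi (Ioi 1) := by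
  intro t ht
  simp only [mem_Ioi] at ht
  have h1 : ContinuousAt phi t := by
    apply ContinuousAt.div
    · exact (Real.continuousAt_log (by linarith)).comp (continuousAt_id.sub continuousAt_const)
    · exact continuousAt_id
    · linarith
  exact h1.continuousWithinAt

lemma Pv_deriv {x : ℝ} (hx : 1 < x) : HasDerivAt Pv (phi x) x :=
  ftc' phi_contOn one_lt_two hx

lemma Pv_contOn : ContinuousOn Pv (Ioi 1) :=
  fun x hx => (Pv_deriv hx).continuousAt.continuousWithinAt

lemma contOn_log_shift (c : ℝ) (hc : -1 < c) : ContinuousOn (fun t : ℝ => Real.log (t + c)) (Ioi 1) := by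
  intro t ht
  simp only [mem_Ioi] at ht
  exact ((Real.continuousAt_log (by intro h; simp only [Pi.add_apply, Pi.sub_apply, id_eq] at h; linarith)).comp
    (continuousAt_id.add continuousAt_const)).continuousWithinAt

lemma Mv_integrand_contOn : ContinuousOn (fun t : ℝ => phi t * Real.log (t + 1)) (Ioi 1) :=
  phi_contOn.mul (contOn_log_shift 1 (by norm_num))

lemma Mv_deriv {x : ℝ} (hx : 1 < x) : HasDerivAt Mv (phi x * Real.log (x + 1)) x :=
  ftc' Mv_integrand_contOn one_lt_two hx

lemma Mv_contOn : ContinuousOn Mv (Ioi 1) :=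
  fun x hx => (Mv_deriv hx).continuousAt.continuousWithinAt

lemma Av_integrand_contOn : ContinuousOn (fun t : ℝ => phi t * Pv (t + 2)) (Ioi 1) := by
  apply phi_contOn.mul
  apply Pv_contOn.comp (continuousOn_id.add continuousOn_const)
  intro t ht; simp only [mem_Ioi, Pi.add_apply, Pi.sub_apply, id_eq] at *; linarith

lemma Av_deriv {x : ℝ} (hx : 1 < x) : HasDerivAt Av (phi x * Pv (x + 2)) x :=
  ftc' Av_integrand_contOn one_lt_two hx

lemma Bv_integrand_contOn :
    ContinuousOn (fun t : ℝ => phi t * (Real.log (t + 1) * Real.log (t + 2))) (Ioi 1) :=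
  phi_contOn.mul ((contOn_log_shift 1 (by norm_num)).mul (contOn_log_shift 2 (by norm_num)))

lemma Bv_deriv {x : ℝ} (hx : 1 < x) :
    HasDerivAt Bv (phi x * (Real.log (x + 1) * Real.log (x + 2))) x :=
  ftc' Bv_integrand_contOn one_lt_two hx

lemma Jv_contOn : ContinuousOn Jv (Ioi 3) := by
  apply ContinuousOn.sub
  · apply ContinuousOn.mul
    · intro u hu; simp only [mem_Ioi] at hu
      exact ((Real.continuousAt_log (by intro h; simp only [Pi.add_apply, Pi.sub_apply, id_eq] at h; linarith)).comp
        (continuousAt_id.sub continuousAt_const)).continuousWithinAt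
    · apply Pv_contOn.comp (continuousOn_id.sub continuousOn_const)
      intro u hu; simp only [mem_Ioi, Pi.add_apply, Pi.sub_apply, id_eq] at *; linarith
  · apply Mv_contOn.comp (continuousOn_id.sub continuousOn_const)
    intro u hu; simp only [mem_Ioi, Pi.add_apply, Pi.sub_apply, id_eq] at *; linarith

lemma Tb_integrand_contOn : ContinuousOn (fun u : ℝ => Pv (u - 2) / (u - 1)) (Ioi 3) := by
  apply ContinuousOn.div
  · apply Pv_contOn.comp (continuousOn_id.sub continuousOn_const)
    intro u hu; simp only [mem_Ioi, Pi.add_apply, Pi.sub_apply, id_eq] at *; linarith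
  · exact continuousOn_id.sub continuousOn_const
  · intro u hu; simp only [mem_Ioi] at hu; intro h; linarith

lemma Tb_deriv {x : ℝ} (hx : 3 < x) : HasDerivAt Tb (Pv (x - 2) / (x - 1)) x :=
  ftc' Tb_integrand_contOn (by norm_num) hx

lemma Dt_integrand_contOn : ContinuousOn (fun u : ℝ => (1 / u) * Jv u) (Ioi 3) := by
  apply ContinuousOn.mul
  · apply ContinuousOn.div continuousOn_const continuousOn_id
    intro u hu; simp only [mem_Ioi] at hu; simp only [id]; intro h; linarith [h]
  · exact Jv_contOn

lemma Dt_deriv {x : ℝ} (hx : 3 < x) : HasDerivAt Dt ((1 / x) * Jv x) x :=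
  ftc' Dt_integrand_contOn (by norm_num) hx

lemma comp_sub_const_deriv {g : ℝ → ℝ} {d x c : ℝ} (h : HasDerivAt g d (x - c)) :
    HasDerivAt (fun y => g (y - c)) d x := by
  exact (h.comp x ((hasDerivAt_id x).sub_const c)).congr_deriv (mul_one d)

lemma hasDerivAt_log_sub {x c : ℝ} (h : x - c ≠ 0) :
    HasDerivAt (fun y : ℝ => Real.log (y - c)) ((x - c)⁻¹) x :=
  comp_sub_const_deriv (Real.hasDerivAt_log h)

lemma phi_intervalIntegrable {a b : ℝ} (ha : 1 < a) (hb : 1 < b) :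
    IntervalIntegrable phi MeasureTheory.volume a b :=
  (phi_contOn.mono (Set.ordConnected_Ioi.uIcc_subset ha hb)).intervalIntegrable

lemma inner_eval {t s : ℝ} (ht : 2 ≤ t) (hts : t ≤ s - 3) :
    (∫ u in (t+2)..(s-1), (1/u) * Real.log ((u-1)/(t+1)))
      = (Pv (s-1) - Pv (t+2)) - Real.log (t+1) * (Real.log (s-1) - Real.log (t+2)) := by
  have hle : t + 2 ≤ s - 1 := by linarith
  have hIcc : Set.uIcc (t+2) (s-1) = Set.Icc (t+2) (s-1) := Set.uIcc_of_le hle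
  have congr1 : Set.EqOn (fun u => (1/u) * Real.log ((u-1)/(t+1)))
      (fun u => phi u - Real.log (t+1) * u⁻¹) (Set.uIcc (t+2) (s-1)) := by
    intro u hu
    rw [hIcc] at hu
    obtain ⟨hu1, hu2⟩ := hu
    have h1 : u - 1 > 0 := by linarith
    have h2 : t + 1 > 0 := by linarith
    simp only [phi]
    rw [Real.log_div (ne_of_gt h1) (ne_of_gt h2)]
    have hu0 : u ≠ 0 := by intro h; rw [h] at hu1; linarith
    field_simp
  rw [intervalIntegral.integral_congr congr1]
  have hint1 : IntervalIntegrable phi MeasureTheory.volume (t+2) (s-1) :=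
    phi_intervalIntegrable (by linarith) (by linarith)
  have hint2 : IntervalIntegrable (fun u : ℝ => Real.log (t+1) * u⁻¹)
      MeasureTheory.volume (t+2) (s-1) := by
    apply ContinuousOn.intervalIntegrable
    apply ContinuousOn.mul continuousOn_const
    apply ContinuousOn.mono continuousOn_inv₀
    rw [hIcc]; intro u hu; simp only [Set.mem_compl_iff, Set.mem_singleton_iff]
    obtain ⟨hu1, _⟩ := hu; intro h; rw [h] at hu1; linarith
  rw [intervalIntegral.integral_sub hint1 hint2, intervalIntegral.integral_const_mul]
  have e1 : (∫ u in (t+2)..(s-1), phi u) = Pv (s-1) - Pv (t+2) := by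
    have h := intervalIntegral.integral_add_adjacent_intervals
      (phi_intervalIntegrable (a := 2) (b := t+2) one_lt_two (by linarith)) hint1
    have hP1 : Pv (t+2) = ∫ u in (2:ℝ)..(t+2), phi u := rfl
    have hP2 : Pv (s-1) = ∫ u in (2:ℝ)..(s-1), phi u := rfl
    rw [hP1, hP2]; linarith
  have e2 : (∫ u in (t+2)..(s-1), u⁻¹) = Real.log (s-1) - Real.log (t+2) := by
    rw [integral_inv]
    · rw [Real.log_div (by linarith) (by linarith)]
    · rw [hIcc]; intro h; obtain ⟨h1, _⟩ := h; linarith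
  rw [e1, e2]

noncomputable def Ev (s : ℝ) : ℝ :=
  Pv (s-1) * Pv (s-3) - Av (s-3) - Real.log (s-1) * Mv (s-3) + Bv (s-3)

lemma contOn_int {g : ℝ → ℝ} (hg : ContinuousOn g (Set.Ioi 1)) {a b : ℝ}
    (ha : 1 < a) (hb : 1 < b) : IntervalIntegrable g MeasureTheory.volume a b :=
  (hg.mono (Set.ordConnected_Ioi.uIcc_subset ha hb)).intervalIntegrable

lemma Pv_two : Pv 2 = 0 := intervalIntegral.integral_same
lemma Mv_two : Mv 2 = 0 := intervalIntegral.integral_same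
lemma Av_two : Av 2 = 0 := intervalIntegral.integral_same
lemma Bv_two : Bv 2 = 0 := intervalIntegral.integral_same
lemma Tb_four : Tb 4 = 0 := intervalIntegral.integral_same
lemma Dt_four : Dt 4 = 0 := intervalIntegral.integral_same

lemma outer_eval {s : ℝ} (hs : 5 ≤ s) :
    (∫ t in (2:ℝ)..(s-3), (Real.log (t-1)/t) * ∫ u in (t+2)..(s-1), (1/u) * Real.log ((u-1)/(t+1)))
      = Ev s := by
  have h23 : (2:ℝ) ≤ s - 3 := by linarith
  have hIcc : Set.uIcc (2:ℝ) (s-3) = Set.Icc 2 (s-3) := Set.uIcc_of_le h23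
  have congr1 : Set.EqOn
      (fun t => (Real.log (t-1)/t) * ∫ u in (t+2)..(s-1), (1/u) * Real.log ((u-1)/(t+1)))
      (fun t => Pv (s-1) * phi t - phi t * Pv (t+2)
        - Real.log (s-1) * (phi t * Real.log (t+1)) + phi t * (Real.log (t+1) * Real.log (t+2)))
      (Set.uIcc (2:ℝ) (s-3)) := by
    intro t htm
    rw [hIcc] at htm
    obtain ⟨ht1, ht2⟩ := htm
    dsimp only
    rw [show (Real.log (t-1)/t) = phi t from rfl, inner_eval ht1 ht2]
    ring
  rw [intervalIntegral.integral_congr congr1]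
  have i1 : IntervalIntegrable (fun t => Pv (s-1) * phi t) MeasureTheory.volume 2 (s-3) :=
    contOn_int (continuousOn_const.mul phi_contOn) one_lt_two (by linarith)
  have i2 : IntervalIntegrable (fun t => phi t * Pv (t+2)) MeasureTheory.volume 2 (s-3) :=
    contOn_int Av_integrand_contOn one_lt_two (by linarith)
  have i3 : IntervalIntegrable (fun t => Real.log (s-1) * (phi t * Real.log (t+1)))
      MeasureTheory.volume 2 (s-3) :=
    contOn_int (continuousOn_const.mul Mv_integrand_contOn) one_lt_two (by linarith)
  have i4 : IntervalIntegrable (fun t => phi t * (Real.log (t+1) * Real.log (t+2)))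
      MeasureTheory.volume 2 (s-3) :=
    contOn_int Bv_integrand_contOn one_lt_two (by linarith)
  rw [intervalIntegral.integral_add ((i1.sub i2).sub i3) i4,
      intervalIntegral.integral_sub (i1.sub i2) i3,
      intervalIntegral.integral_sub i1 i2,
      intervalIntegral.integral_const_mul, intervalIntegral.integral_const_mul]
  rfl

lemma Ev_eq_Dt : ∀ s ∈ Set.Icc (5:ℝ) 7, Ev s = Dt (s-1) := by
  have hEvD : ∀ x : ℝ, 5 ≤ x → x ≤ 7 →
      HasDerivAt Ev ((1/(x-1)) * Jv (x-1)) x := by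
    intro x h5 h7
    have h1 : HasDerivAt (fun y : ℝ => Pv (y-1)) (phi (x-1)) x :=
      comp_sub_const_deriv (Pv_deriv (show (1:ℝ) < x - 1 by linarith))
    have h3 : HasDerivAt (fun y : ℝ => Pv (y-3)) (phi (x-3)) x :=
      comp_sub_const_deriv (Pv_deriv (show (1:ℝ) < x - 3 by linarith))
    have hA : HasDerivAt (fun y : ℝ => Av (y-3)) (phi (x-3) * Pv (x-3+2)) x :=
      comp_sub_const_deriv (Av_deriv (show (1:ℝ) < x - 3 by linarith))
    have hlog : HasDerivAt (fun y : ℝ => Real.log (y-1)) ((x-1)⁻¹) x :=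
      hasDerivAt_log_sub (by intro h; rw [sub_eq_zero] at h; linarith)
    have hM : HasDerivAt (fun y : ℝ => Mv (y-3)) (phi (x-3) * Real.log (x-3+1)) x :=
      comp_sub_const_deriv (Mv_deriv (show (1:ℝ) < x - 3 by linarith))
    have hB : HasDerivAt (fun y : ℝ => Bv (y-3))
        (phi (x-3) * (Real.log (x-3+1) * Real.log (x-3+2))) x :=
      comp_sub_const_deriv (Bv_deriv (show (1:ℝ) < x - 3 by linarith))
    have hEv : HasDerivAt Ev
        ((phi (x-1) * Pv (x-3) + Pv (x-1) * phi (x-3) - phi (x-3) * Pv (x-3+2)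
          - ((x-1)⁻¹ * Mv (x-3) + Real.log (x-1) * (phi (x-3) * Real.log (x-3+1))))
          + phi (x-3) * (Real.log (x-3+1) * Real.log (x-3+2))) x :=
      (((h1.mul h3).sub hA).sub (hlog.mul hM)).add hB
    have e1 : x - 3 + 2 = x - 1 := by ring
    have e2 : x - 3 + 1 = x - 2 := by ring
    rw [e1, e2] at hEv
    convert hEv using 1
    have e3 : phi (x-1) = Real.log (x-2) / (x-1) := by
      simp only [phi]; norm_num; ring_nf
    have e4 : Jv (x-1) = Real.log (x-2) * Pv (x-3) - Mv (x-3) := by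
      simp only [Jv]; norm_num; ring_nf
    rw [e4, e3]
    ring
  have hDtD : ∀ x : ℝ, 5 ≤ x → x ≤ 7 →
      HasDerivAt (fun y : ℝ => Dt (y-1)) ((1/(x-1)) * Jv (x-1)) x := by
    intro x h5 h7
    exact comp_sub_const_deriv (Dt_deriv (show (3:ℝ) < x - 1 by linarith))
  refine eqOn_of_deriv' (d := fun x => (1/(x-1)) * Jv (x-1)) ?_ ?_ ?_ ?_ ?_
  · intro x hx
    exact (hEvD x hx.1 hx.2).continuousAt.continuousWithinAt
  · intro x hx
    exact (hDtD x hx.1 hx.2).continuousAt.continuousWithinAt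
  · intro x hx
    exact hEvD x hx.1.le hx.2.le
  · intro x hx
    exact hDtD x hx.1.le hx.2.le
  · show Ev 5 = Dt (5 - 1)
    norm_num [Ev, Pv_two, Mv_two, Av_two, Bv_two, Dt_four]

theorem linear_sieve_F_on_5_7
    (F f : ℝ → ℝ)
    (hFc : ContinuousOn F (Set.Ioi 0)) (hfc : ContinuousOn f (Set.Ioi 0))
    (hF0 : ∀ s : ℝ, 0 < s → s ≤ 2 →
      F s = 2 * Real.exp Real.eulerMascheroniConstant / s)
    (hf0 : ∀ s : ℝ, 0 < s → s ≤ 2 → f s = 0)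
    (hF' : ∀ s : ℝ, 2 < s → HasDerivAt (fun t => t * F t) (f (s - 1)) s)
    (hf' : ∀ s : ℝ, 2 < s → HasDerivAt (fun t => t * f t) (F (s - 1)) s) :
    ∀ s : ℝ, 5 ≤ s → s ≤ 7 →
      F s = 2 * Real.exp Real.eulerMascheroniConstant / s *
        (1 + (∫ t in (2 : ℝ)..(s - 1), Real.log (t - 1) / t) +
          ∫ t in (2 : ℝ)..(s - 3),
            (Real.log (t - 1) / t) *
              ∫ u in (t + 2)..(s - 1), (1 / u) * Real.log ((u - 1) / (t + 1))) := by
  set c : ℝ := 2 * Real.exp Real.eulerMascheroniConstant with hc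
  -- Stage 1 : F s = c / s on (0, 3]
  have S1 : ∀ s ∈ Set.Ioc (0:ℝ) 3, F s = c / s := by
    intro s hs
    obtain ⟨hs0, hs3⟩ := hs
    rcases le_or_gt s 2 with h | h
    · exact hF0 s hs0 h
    · have key := eqOn_of_deriv' (a := 2) (b := 3)
        (g := fun x => x * F x) (h := fun _ => c) (d := fun _ => 0)
        (continuousOn_id.mul (hFc.mono (by
          intro x hx; simp only [Set.mem_Icc, Set.mem_Ioi] at *; linarith)))
        continuousOn_const
        (by
          intro x hx
          obtain ⟨hx2, hx3⟩ := hx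
          have h1 := hF' x hx2
          rwa [hf0 (x-1) (by linarith) (by linarith)] at h1)
        (by intro x _; simpa using hasDerivAt_const x c)
        (by show 2 * F 2 = c; rw [hF0 2 two_pos le_rfl]; ring)
      have := key s ⟨h.le, hs3⟩
      rw [eq_div_iff (ne_of_gt hs0)]
      linarith [this]
  -- Stage 2 : f s = c * log (s-1) / s on [2, 4]
  have S2 : ∀ s ∈ Set.Icc (2:ℝ) 4, f s = c * Real.log (s - 1) / s := by
    intro s hs
    obtain ⟨hs2, hs4⟩ := hs
    have key := eqOn_of_deriv' (a := 2) (b := 4)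
      (g := fun x => x * f x) (h := fun x => c * Real.log (x - 1))
      (d := fun x => c * (x - 1)⁻¹)
      (continuousOn_id.mul (hfc.mono (by
        intro x hx; simp only [Set.mem_Icc, Set.mem_Ioi] at *; linarith)))
      (by
        intro x hx
        obtain ⟨hx2, hx4⟩ := hx
        exact (continuousAt_const.mul
          ((Real.continuousAt_log (by intro h; simp only [Pi.add_apply, Pi.sub_apply, id_eq] at h; linarith)).comp
            (continuousAt_id.sub continuousAt_const))).continuousWithinAt)
      (by
        intro x hx
        obtain ⟨hx2, hx4⟩ := hx
        have h1 := hf' x hx2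
        have h2 : F (x - 1) = c / (x - 1) := S1 (x-1) ⟨by linarith, by linarith⟩
        rw [h2] at h1
        rwa [div_eq_mul_inv] at h1)
      (by
        intro x hx
        obtain ⟨hx2, hx4⟩ := hx
        exact (hasDerivAt_log_sub (by intro h; rw [sub_eq_zero] at h; linarith)).const_mul c)
      (by
        show 2 * f 2 = c * Real.log (2 - 1)
        rw [hf0 2 two_pos le_rfl]
        norm_num)
    have := key s ⟨hs2, hs4⟩
    have hs0 : s ≠ 0 := by intro h; rw [h] at hs2; linarith
    rw [eq_div_iff hs0]
    linarith [this]
  -- Stage 3 : s * F s = c * (1 + Pv (s-1)) on [3, 5]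
  have S3 : ∀ s ∈ Set.Icc (3:ℝ) 5, s * F s = c * (1 + Pv (s - 1)) := by
    have hder : ∀ x : ℝ, 3 ≤ x → x ≤ 5 →
        HasDerivAt (fun y : ℝ => c * (1 + Pv (y - 1))) (c * phi (x - 1)) x := by
      intro x h3 h5
      have hP : HasDerivAt (fun y : ℝ => Pv (y - 1)) (phi (x-1)) x :=
        comp_sub_const_deriv (Pv_deriv (show (1:ℝ) < x - 1 by linarith))
      simpa using ((hasDerivAt_const x (1:ℝ)).add hP).const_mul c
    refine fun s hs => eqOn_of_deriv' (a := 3) (b := 5)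
      (g := fun x => x * F x) (h := fun x => c * (1 + Pv (x - 1)))
      (d := fun x => c * phi (x - 1))
      (continuousOn_id.mul (hFc.mono (by
        intro x hx; simp only [Set.mem_Icc, Set.mem_Ioi] at *; linarith)))
      (fun x hx => (hder x hx.1 hx.2).continuousAt.continuousWithinAt)
      ?_ (fun x hx => hder x hx.1.le hx.2.le) ?_ s hs
    · intro x hx
      obtain ⟨hx3, hx5⟩ := hx
      have h1 := hF' x (by linarith)
      have h2 : f (x - 1) = c * Real.log (x - 1 - 1) / (x - 1) :=
        S2 (x-1) ⟨by linarith, by linarith⟩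
      rw [h2] at h1
      have e : c * Real.log (x - 1 - 1) / (x - 1) = c * phi (x - 1) := by
        simp only [phi]; ring
      rwa [e] at h1
    · have hF3 : F 3 = c / 3 := S1 3 ⟨by norm_num, le_rfl⟩
      show 3 * F 3 = c * (1 + Pv (3 - 1))
      rw [hF3]
      norm_num [Pv_two]
      ring
  -- Stage 4 : s * f s = c * (log (s-1) + Tb s) on [4, 6]
  have S4 : ∀ s ∈ Set.Icc (4:ℝ) 6, s * f s = c * (Real.log (s - 1) + Tb s) := by
    have hder : ∀ x : ℝ, 4 ≤ x → x ≤ 6 →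
        HasDerivAt (fun y : ℝ => c * (Real.log (y - 1) + Tb y))
          (c * ((1 + Pv (x - 2)) / (x - 1))) x := by
      intro x h4 h6
      have hlog : HasDerivAt (fun y : ℝ => Real.log (y - 1)) ((x-1)⁻¹) x :=
        hasDerivAt_log_sub (by intro h; rw [sub_eq_zero] at h; linarith)
      have hT : HasDerivAt Tb (Pv (x - 2) / (x - 1)) x := Tb_deriv (by linarith)
      have : HasDerivAt (fun y : ℝ => c * (Real.log (y - 1) + Tb y))
          (c * ((x - 1)⁻¹ + Pv (x - 2) / (x - 1))) x := (hlog.add hT).const_mul c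
      convert this using 1
      have hne : x - 1 ≠ 0 := by intro h; rw [sub_eq_zero] at h; linarith
      ring
    refine fun s hs => eqOn_of_deriv' (a := 4) (b := 6)
      (g := fun x => x * f x) (h := fun x => c * (Real.log (x - 1) + Tb x))
      (d := fun x => c * ((1 + Pv (x - 2)) / (x - 1)))
      (continuousOn_id.mul (hfc.mono (by
        intro x hx; simp only [Set.mem_Icc, Set.mem_Ioi] at *; linarith)))
      (fun x hx => (hder x hx.1 hx.2).continuousAt.continuousWithinAt)
      ?_ (fun x hx => hder x hx.1.le hx.2.le) ?_ s hs
    · intro x hx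
      obtain ⟨hx4, hx6⟩ := hx
      have h1 := hf' x (by linarith)
      have h2 : (x - 1) * F (x - 1) = c * (1 + Pv (x - 1 - 1)) :=
        S3 (x-1) ⟨by linarith, by linarith⟩
      have hne : x - 1 ≠ 0 := by intro h; rw [sub_eq_zero] at h; linarith
      have h3 : F (x - 1) = c * ((1 + Pv (x - 2)) / (x - 1)) := by
        rw [show x - 1 - 1 = x - 2 by ring] at h2
        field_simp at h2 ⊢
        linarith [h2]
      rwa [h3] at h1
    · have hf4 : f 4 = c * Real.log (4 - 1) / 4 := S2 4 ⟨by norm_num, le_rfl⟩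
      show 4 * f 4 = c * (Real.log (4 - 1) + Tb 4)
      rw [hf4, Tb_four]
      ring
  -- Tb = Jv on [4, 6]
  have SJ : ∀ x ∈ Set.Icc (4:ℝ) 6, Tb x = Jv x := by
    have hJder : ∀ x : ℝ, 4 ≤ x → x ≤ 6 →
        HasDerivAt Jv (Pv (x - 2) / (x - 1)) x := by
      intro x h4 h6
      have hlog : HasDerivAt (fun y : ℝ => Real.log (y - 1)) ((x-1)⁻¹) x :=
        hasDerivAt_log_sub (by intro h; rw [sub_eq_zero] at h; linarith)
      have hP : HasDerivAt (fun y : ℝ => Pv (y - 2)) (phi (x-2)) x :=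
        comp_sub_const_deriv (Pv_deriv (show (1:ℝ) < x - 2 by linarith))
      have hM : HasDerivAt (fun y : ℝ => Mv (y - 2)) (phi (x-2) * Real.log (x-2+1)) x :=
        comp_sub_const_deriv (Mv_deriv (show (1:ℝ) < x - 2 by linarith))
      have := (hlog.mul hP).sub hM
      have hJ : HasDerivAt Jv
          ((x-1)⁻¹ * Pv (x-2) + Real.log (x-1) * phi (x-2)
            - phi (x-2) * Real.log (x-2+1)) x := this
      rw [show x - 2 + 1 = x - 1 by ring] at hJ
      convert hJ using 1
      ring
    have hTder : ∀ x : ℝ, 4 ≤ x → x ≤ 6 →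
        HasDerivAt Tb (Pv (x - 2) / (x - 1)) x := fun x h4 _ => Tb_deriv (by linarith)
    refine eqOn_of_deriv' (d := fun x => Pv (x - 2) / (x - 1))
      (fun x hx => (hTder x hx.1 hx.2).continuousAt.continuousWithinAt)
      (fun x hx => (hJder x hx.1 hx.2).continuousAt.continuousWithinAt)
      (fun x hx => hTder x hx.1.le hx.2.le)
      (fun x hx => hJder x hx.1.le hx.2.le)
      ?_
    show Tb 4 = Jv 4
    norm_num [Tb_four, Jv, Pv_two, Mv_two]
  -- Stage 5 : s * F s = c * (1 + Pv (s-1) + Dt (s-1)) on [5, 7]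
  have S5 : ∀ s ∈ Set.Icc (5:ℝ) 7, s * F s = c * (1 + Pv (s - 1) + Dt (s - 1)) := by
    have hder : ∀ x : ℝ, 5 ≤ x → x ≤ 7 →
        HasDerivAt (fun y : ℝ => c * (1 + Pv (y - 1) + Dt (y - 1)))
          (c * (phi (x - 1) + (1 / (x-1)) * Jv (x - 1))) x := by
      intro x h5 h7
      have hP : HasDerivAt (fun y : ℝ => Pv (y - 1)) (phi (x-1)) x :=
        comp_sub_const_deriv (Pv_deriv (show (1:ℝ) < x - 1 by linarith))
      have hD : HasDerivAt (fun y : ℝ => Dt (y - 1)) ((1/(x-1)) * Jv (x-1)) x :=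
        comp_sub_const_deriv (Dt_deriv (show (3:ℝ) < x - 1 by linarith))
      simpa using (((hasDerivAt_const x (1:ℝ)).add hP).add hD).const_mul c
    refine fun s hs => eqOn_of_deriv' (a := 5) (b := 7)
      (g := fun x => x * F x) (h := fun x => c * (1 + Pv (x - 1) + Dt (x - 1)))
      (d := fun x => c * (phi (x - 1) + (1 / (x-1)) * Jv (x - 1)))
      (continuousOn_id.mul (hFc.mono (by
        intro x hx; simp only [Set.mem_Icc, Set.mem_Ioi] at *; linarith)))
      (fun x hx => (hder x hx.1 hx.2).continuousAt.continuousWithinAt)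
      ?_ (fun x hx => hder x hx.1.le hx.2.le) ?_ s hs
    · intro x hx
      obtain ⟨hx5, hx7⟩ := hx
      have h1 := hF' x (by linarith)
      have h2 : (x - 1) * f (x - 1) = c * (Real.log (x - 1 - 1) + Tb (x - 1)) :=
        S4 (x-1) ⟨by linarith, by linarith⟩
      have hJT : Tb (x - 1) = Jv (x - 1) := SJ (x-1) ⟨by linarith, by linarith⟩
      have hne : x - 1 ≠ 0 := by intro h; rw [sub_eq_zero] at h; linarith
      have h3 : f (x - 1) = c * (phi (x - 1) + (1 / (x-1)) * Jv (x - 1)) := by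
        rw [hJT, show x - 1 - 1 = x - 2 by ring] at h2
        have e : phi (x - 1) = Real.log (x - 2) / (x - 1) := by
          simp only [phi]; ring_nf
        rw [e]
        field_simp at h2 ⊢
        linarith [h2]
      rwa [h3] at h1
    · have h5F : 5 * F 5 = c * (1 + Pv (5 - 1)) := S3 5 ⟨by norm_num, le_rfl⟩
      simp only [h5F]
      norm_num [Dt_four]
  -- Conclusion
  intro s h5 h7
  have hs0 : (0:ℝ) < s := by linarith
  have key := S5 s ⟨h5, h7⟩
  have hD : (∫ t in (2 : ℝ)..(s - 3),
      (Real.log (t - 1) / t) *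
        ∫ u in (t + 2)..(s - 1), (1 / u) * Real.log ((u - 1) / (t + 1))) = Dt (s - 1) := by
    rw [outer_eval h5]
    exact Ev_eq_Dt s ⟨h5, h7⟩
  have hP : (∫ t in (2 : ℝ)..(s - 1), Real.log (t - 1) / t) = Pv (s - 1) := rfl
  have hFs : F s = c * (1 + Pv (s - 1) + Dt (s - 1)) / s := by
    rw [← key]; field_simp
  rw [hD, hP, hFs]
  ring
end
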